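/- Suppose b = b_k,…,b_0 is a colour witness for ρ, d = φ(v_{m+1}) is even, the set {i : b_i ≠ ⊥ and b_i < d} is nonempty with maximum j, and b_j is odd. Define c by: for all i ≥ j, c_i = d if b_i ≠ ⊥ and b_i < d, and c_i = b_i otherwise; c_i = ⊥ for all i with 0 < i < j; and c_0 = d. Then c is a colour witness for ρ' = v_1,…,v_m,v_{m+1}. -/

import Mathlib

open scoped Classical

/-- Membership in `C⁻`, where `C = {lo,…,hi}`: everything of `C` except `hi` when `hi` is odd. -/
def CminusMem (lo hi c : ℕ) : Prop := lo ≤ c ∧ c ≤ hi ∧ (Even hi ∨ c ≠ hi)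

/-- The index of the first position of an `i`-colour-witness: `1` if the colour `i` is even
and `0` if it is odd. -/
def startIdx (i : ℕ) : ℕ := if Even i then 1 else 0

variable {V : Type*}

/-- `p`, on indices `startIdx i, …, len`, is an `i`-colour-witness of length `len` for the
play prefix `v_1,…,v_m`: strictly increasing positions, all but the final one of even colour,
the final one of colour `i`, with inner domination and outer domination by `i`. -/
def IsCWit (φ : V → ℕ) (v : ℕ → V) (m i len : ℕ) (p : ℕ → ℕ) : Prop :=
  1 ≤ len ∧
  (∀ j, startIdx i ≤ j → j ≤ len → 1 ≤ p j ∧ p j ≤ m) ∧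
  (∀ j, startIdx i ≤ j → j < len → p j < p (j + 1)) ∧
  (∀ j, startIdx i ≤ j → j < len → Even (φ (v (p j)))) ∧
  φ (v (p len)) = i ∧
  (∀ j, startIdx i ≤ j → j < len → ∀ t, p j ≤ t → t ≤ p (j + 1) →
      φ (v t) ≤ max (φ (v (p j))) (φ (v (p (j + 1))))) ∧
  (∀ t, p len ≤ t → t ≤ m → φ (v t) ≤ i)

/-- The colour `c` occurs among the entries `b_0,…,b_k` of `b`. -/
def occursIn (k : ℕ) (b : ℕ → Option ℕ) (c : ℕ) : Prop := ∃ p ≤ k, b p = some c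

/-- `unblk(i,b)`: the colours `j` occurring in `b` with `i ≤ j < odd(i,b)`, where `odd(i,b)`
is the least odd colour strictly greater than `i` occurring in `b` (`∞` if none). -/
noncomputable def unblkF (hi k : ℕ) (b : ℕ → Option ℕ) (i : ℕ) : Finset ℕ :=
  (Finset.range (hi + 1)).filter fun j =>
    occursIn k b j ∧ i ≤ j ∧ ∀ o, Odd o → i < o → o ≤ j → ¬ occursIn k b o

/-- `ubp(i,b)`: the positions of `b` whose entry is a colour of `unblk(i,b)`. -/
noncomputable def ubpF (hi k : ℕ) (b : ℕ → Option ℕ) (i : ℕ) : Finset ℕ :=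
  (Finset.range (k + 1)).filter fun p => ∃ c, b p = some c ∧ c ∈ unblkF hi k b i

/-- `b = b_k,…,b_0` is a colour witness for the play prefix `v_1,…,v_m`, for the colouring
`φ` into `C = {lo,…,hi}`. -/
def IsColourWitness (lo hi : ℕ) (φ : V → ℕ) (v : ℕ → V) (m k : ℕ)
    (b : ℕ → Option ℕ) : Prop :=
  (∀ p ≤ k, ∀ c, b p = some c → CminusMem lo hi c) ∧
  -- order
  (∀ i j, j < i → i ≤ k → ∀ ci cj, b i = some ci → b j = some cj → cj ≤ ci) ∧
  -- conciseness
  (∀ o, Odd o → ∀ i j, i ≤ k → j ≤ k → i ≠ j → b i = some o → ¬ b j = some o) ∧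
  (∀ c, b 0 = some c → ¬ Odd c) ∧
  -- the family of colour witnesses
  ∃ (ℓ : ℕ → ℕ) (P : ℕ → ℕ → ℕ),
    (∀ i, occursIn k b i → IsCWit φ v m i (ℓ i) (P i)) ∧
    -- ordered witnesses
    (∀ i j, occursIn k b i → occursIn k b j → j < i → P i (ℓ i) < P j (startIdx j)) ∧
    -- length constraints
    (∀ i, CminusMem lo hi i → (∑ p ∈ ubpF hi k b i, 2 ^ p) ≤ ∑ j ∈ unblkF hi k b i, ℓ j)

lemma nat_sum_insert_le (a : ℕ) (s : Finset ℕ) (f : ℕ → ℕ) :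
    (∑ x ∈ insert a s, f x) ≤ f a + ∑ x ∈ s, f x := by
  by_cases h : a ∈ s
  · rw [Finset.insert_eq_self.2 h]; exact Nat.le_add_left _ _
  · rw [Finset.sum_insert h]

lemma IsCWit.extend {φ : V → ℕ} {v : ℕ → V} {m i len : ℕ} {p : ℕ → ℕ}
    (h : IsCWit φ v m i len p) (hlast : φ (v (m + 1)) ≤ i) :
    IsCWit φ v (m + 1) i len p := by
  obtain ⟨h1, h2, h3, h4, h5, h6, h7⟩ := h
  refine ⟨h1, fun j hj hj' => ⟨(h2 j hj hj').1, (h2 j hj hj').2.trans (Nat.le_succ m)⟩,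
    h3, h4, h5, h6, fun t ht ht' => ?_⟩
  rcases Nat.lt_or_ge t (m + 1) with h | h
  · exact h7 t ht (by omega)
  · have : t = m + 1 := by omega
    subst this
    exact hlast

lemma concat_wit (φ : V → ℕ) (v : ℕ → V) (m d c₀ Dl L0 : ℕ) (Pd Pc : ℕ → ℕ)
    (hd : Even d) (hc₀ : c₀ < d)
    (hL0 : 1 ≤ L0)
    (hcbd : ∀ t ≤ L0, 1 ≤ Pc t ∧ Pc t ≤ m)
    (hcmono : ∀ t < L0, Pc t < Pc (t + 1))
    (hceven : ∀ t < L0, Even (φ (v (Pc t))))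
    (hclast : φ (v (Pc L0)) = c₀)
    (hcinner : ∀ t < L0, ∀ s, Pc t ≤ s → s ≤ Pc (t + 1) →
        φ (v s) ≤ max (φ (v (Pc t))) (φ (v (Pc (t + 1)))))
    (hcouter : ∀ s, Pc L0 ≤ s → s ≤ m → φ (v s) ≤ c₀)
    (hdm1 : φ (v (m + 1)) = d)
    (hdbd : ∀ t, 1 ≤ t → t ≤ Dl → 1 ≤ Pd t ∧ Pd t ≤ m)
    (hdmono : ∀ t, 1 ≤ t → t < Dl → Pd t < Pd (t + 1))
    (hdeven' : ∀ t, 1 ≤ t → t < Dl → Even (φ (v (Pd t))))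
    (hdlast : 1 ≤ Dl → φ (v (Pd Dl)) = d)
    (hdinner : ∀ t, 1 ≤ t → t < Dl → ∀ s, Pd t ≤ s → s ≤ Pd (t + 1) →
        φ (v s) ≤ max (φ (v (Pd t))) (φ (v (Pd (t + 1)))))
    (hdouter : 1 ≤ Dl → ∀ s, Pd Dl ≤ s → s ≤ m → φ (v s) ≤ d)
    (hord : 1 ≤ Dl → Pd Dl < Pc 0) :
    IsCWit φ v (m + 1) d (Dl + L0 + 1)
      (fun t => if t ≤ Dl then Pd t else if t ≤ Dl + L0 then Pc (t - Dl - 1) else m + 1) := by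
  have hsd : startIdx d = 1 := if_pos hd
  refine ⟨by omega, ?_, ?_, ?_, ?_, ?_, ?_⟩
  · -- bounds
    intro t h1 h2
    rw [hsd] at h1
    dsimp only
    by_cases hA : t ≤ Dl
    · rw [if_pos hA]
      have := hdbd t h1 hA
      omega
    · rw [if_neg hA]
      by_cases hB : t ≤ Dl + L0
      · rw [if_pos hB]
        have := hcbd (t - Dl - 1) (by omega)
        omega
      · rw [if_neg hB]; omega
  · -- mono
    intro t h1 h2
    rw [hsd] at h1
    dsimp only
    by_cases hA : t + 1 ≤ Dl
    · rw [if_pos (by omega : t ≤ Dl), if_pos hA]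
      exact hdmono t h1 (by omega)
    · by_cases hA' : t ≤ Dl
      · -- t = Dl, 1 ≤ Dl
        have hDl1 : 1 ≤ Dl := by omega
        have ht : t = Dl := by omega
        rw [if_pos hA', if_neg hA, if_pos (by omega : t + 1 ≤ Dl + L0)]
        have : t + 1 - Dl - 1 = 0 := by omega
        rw [this, ht]
        exact hord hDl1
      · rw [if_neg hA', if_neg hA]
        by_cases hB : t + 1 ≤ Dl + L0
        · rw [if_pos (by omega : t ≤ Dl + L0), if_pos hB]
          have heq : t + 1 - Dl - 1 = (t - Dl - 1) + 1 := by omega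
          rw [heq]
          exact hcmono (t - Dl - 1) (by omega)
        · by_cases hB' : t ≤ Dl + L0
          · rw [if_pos hB', if_neg hB]
            have := hcbd (t - Dl - 1) (by omega)
            omega
          · omega
  · -- even
    intro t h1 h2
    rw [hsd] at h1
    dsimp only
    by_cases hA : t ≤ Dl
    · rw [if_pos hA]
      rcases Nat.lt_or_ge t Dl with h | h
      · exact hdeven' t h1 h
      · have ht : t = Dl := by omega
        rw [ht, hdlast (by omega)]
        exact hd
    · rw [if_neg hA, if_pos (by omega : t ≤ Dl + L0)]
      exact hceven (t - Dl - 1) (by omega)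
  · -- last
    dsimp only
    rw [if_neg (by omega : ¬ Dl + L0 + 1 ≤ Dl), if_neg (by omega : ¬ Dl + L0 + 1 ≤ Dl + L0)]
    exact hdm1
  · -- inner
    intro t h1 h2 s hs1 hs2
    rw [hsd] at h1
    dsimp only at hs1 hs2 ⊢
    by_cases hA : t + 1 ≤ Dl
    · simp only [if_pos (show t ≤ Dl by omega), if_pos hA] at hs1 hs2 ⊢
      exact hdinner t h1 (by omega) s hs1 hs2
    · by_cases hA' : t ≤ Dl
      · have hDl1 : 1 ≤ Dl := by omega
        have ht : t = Dl := by omega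
        simp only [if_pos hA', if_neg hA, if_pos (show t + 1 ≤ Dl + L0 by omega),
          (show t + 1 - Dl - 1 = 0 by omega)] at hs2 ⊢
        simp only [if_pos hA'] at hs1
        have hs2' : s ≤ m := le_trans hs2 (hcbd 0 (by omega)).2
        have := hdouter hDl1 s (by rwa [ht] at hs1) hs2'
        rw [ht, hdlast hDl1]
        exact le_trans this (le_max_left _ _)
      · by_cases hB : t + 1 ≤ Dl + L0
        · simp only [if_neg hA', if_neg hA, if_pos (show t ≤ Dl + L0 by omega), if_pos hB,
            (show t + 1 - Dl - 1 = (t - Dl - 1) + 1 by omega)] at hs1 hs2 ⊢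
          exact hcinner (t - Dl - 1) (by omega) s hs1 hs2
        · -- t = Dl + L0
          simp only [if_neg hA', if_neg hA, if_pos (show t ≤ Dl + L0 by omega), if_neg hB,
            (show t - Dl - 1 = L0 - 1 by omega)] at hs1 hs2 ⊢
          have hidx : (L0 - 1) + 1 = L0 := by omega
          rcases Nat.lt_or_ge s (m + 1) with hsm | hsm
          · rcases le_or_gt s (Pc L0) with hsc | hsc
            · have := hcinner (L0 - 1) (by omega) s hs1 (by rwa [hidx])
              rw [hidx, hclast] at this
              refine le_trans this ?_
              rw [hdm1]
              exact max_le_max le_rfl (le_of_lt hc₀)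
            · have := hcouter s (le_of_lt hsc) (by omega)
              rw [hdm1]
              exact le_trans (le_of_lt (lt_of_le_of_lt this hc₀)) (le_max_right _ _)
          · have : s = m + 1 := by omega
            subst this
            exact le_max_right _ _
  · -- outer
    intro s hs1 hs2
    dsimp only at hs1
    rw [if_neg (by omega : ¬ Dl + L0 + 1 ≤ Dl), if_neg (by omega : ¬ Dl + L0 + 1 ≤ Dl + L0)] at hs1
    have : s = m + 1 := by omega
    subst this
    rw [hdm1]

/-- Local update lemma for an even colour `d = φ(v_{m+1})`, when the greatest index `j` whose
entry is a colour `< d` carries an odd colour: setting, for `i ≥ j`, `c_i = d` if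
`b_i ≠ ⊥` and `b_i < d` and `c_i = b_i` otherwise, `c_i = ⊥` for `0 < i < j`, and `c_0 = d`,
yields a colour witness for `ρ' = v_1,…,v_m,v_{m+1}`. -/
theorem colour_witness_update_even_local (lo hi : ℕ) (hlo : lo = 1 ∨ lo = 2) (hlohi : lo ≤ hi)
    (φ : V → ℕ) (hφ : ∀ x, φ x ∈ Set.Icc lo hi) (v : ℕ → V) (m : ℕ) (hm : 1 ≤ m)
    (k : ℕ) (b : ℕ → Option ℕ) (hb : IsColourWitness lo hi φ v m k b)
    (hdeven : Even (φ (v (m + 1))))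
    (j : ℕ) (hj : j ≤ k)
    (hatj : ∃ c, b j = some c ∧ c < φ (v (m + 1)) ∧ Odd c)
    (hmax : ∀ i, j < i → i ≤ k → ¬ ∃ c, b i = some c ∧ c < φ (v (m + 1))) :
    IsColourWitness lo hi φ v (m + 1) k
      (fun i => if j ≤ i then
                  (if ∃ c, b i = some c ∧ c < φ (v (m + 1)) then some (φ (v (m + 1))) else b i)
                else if i = 0 then some (φ (v (m + 1))) else none) := by
  set d := φ (v (m + 1)) with hd
  obtain ⟨hmem, hord, hconc, hconc0, ℓ, P, hWit, hOrd, hLen⟩ := hb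
  obtain ⟨c₀, hbj, hc₀d, hc₀odd⟩ := hatj
  set B : ℕ → Option ℕ := fun i => if j ≤ i then
      (if ∃ c, b i = some c ∧ c < d then some d else b i)
    else if i = 0 then some d else none with hBdef
  have hdlo : lo ≤ d := by rw [hd]; exact (hφ (v (m + 1))).1
  have hdhi : d ≤ hi := by rw [hd]; exact (hφ (v (m + 1))).2
  have hB0 : B 0 = some d := by
    simp only [hBdef]
    by_cases h0 : j = 0
    · subst h0
      rw [if_pos (le_refl 0), if_pos ⟨c₀, hbj, hc₀d⟩]
    · rw [if_neg (by omega)]; simp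
  have hBj : B j = some d := by
    simp only [hBdef]
    rw [if_pos le_rfl, if_pos ⟨c₀, hbj, hc₀d⟩]
  have hBmid : ∀ p, 0 < p → p < j → B p = none := by
    intro p h1 h2
    simp only [hBdef]
    rw [if_neg (by omega), if_neg (by omega)]
  have hBgt : ∀ p, j < p → p ≤ k → B p = b p := by
    intro p h1 h2
    simp only [hBdef]
    rw [if_pos (by omega), if_neg (hmax p h1 h2)]
  have hSge : ∀ p c, j < p → p ≤ k → b p = some c → d ≤ c := by
    intro p c h1 h2 h3
    by_contra h
    exact hmax p h1 h2 ⟨c, h3, by omega⟩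
  have hle_c₀ : ∀ p c, p ≤ j → b p = some c → c ≤ c₀ := by
    intro p c h1 h2
    rcases Nat.lt_or_ge p j with h | h
    · exact hord j p h hj c₀ c hbj h2
    · have he : p = j := by omega
      subst he
      rw [h2] at hbj
      exact le_of_eq (Option.some.inj hbj)
  have hoccB : ∀ c, occursIn k B c ↔ (c = d ∨ ∃ p, j < p ∧ p ≤ k ∧ b p = some c) := by
    intro c
    constructor
    · rintro ⟨p, hpk, hp⟩
      rcases Nat.lt_trichotomy p j with h | h | h
      · rcases Nat.eq_zero_or_pos p with h0 | h0
        · subst h0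
          rw [hB0] at hp
          exact Or.inl (Option.some.inj hp).symm
        · rw [hBmid p h0 h] at hp
          exact absurd hp (by simp)
      · subst h
        rw [hBj] at hp
        exact Or.inl (Option.some.inj hp).symm
      · exact Or.inr ⟨p, h, hpk, by rw [← hBgt p h hpk]; exact hp⟩
    · rintro (rfl | ⟨p, h1, h2, h3⟩)
      · exact ⟨0, Nat.zero_le k, hB0⟩
      · exact ⟨p, h2, by rw [hBgt p h1 h2]; exact h3⟩
  have hoccgt : ∀ c, occursIn k b c → c₀ < c →
      (∃ p, j < p ∧ p ≤ k ∧ b p = some c) ∧ d ≤ c := by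
    rintro c ⟨p, hpk, hp⟩ hc
    rcases le_or_gt p j with h | h
    · exact absurd (hle_c₀ p c h hp) (by omega)
    · exact ⟨⟨p, h, hpk, hp⟩, hSge p c h hpk hp⟩
  have hoddgt : ∀ o, Odd o → occursIn k b o → c₀ < o → d < o := by
    intro o ho hocc hgt
    have h2 := (hoccgt o hocc hgt).2
    rcases h2.lt_or_eq with h | h
    · exact h
    · exact absurd (h ▸ hdeven) (Nat.not_even_iff_odd.2 ho)
  have hoccBofb : ∀ c, occursIn k b c → d ≤ c → occursIn k B c := by
    rintro c ⟨p, hpk, hp⟩ hdc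
    have hpj : j < p := by
      by_contra h
      have := hle_c₀ p c (by omega) hp
      omega
    exact ⟨p, hpk, by rw [hBgt p hpj hpk]; exact hp⟩
  have hoddB : ∀ o, Odd o → occursIn k B o → d < o ∧ occursIn k b o := by
    intro o ho hocc
    rcases (hoccB o).1 hocc with h | ⟨p, hp1, hp2, hp3⟩
    · exfalso
      subst h
      exact (Nat.not_odd_iff_even.2 hdeven) ho
    · have hdo := hSge p o hp1 hp2 hp3
      have hne : o ≠ d := by
        intro h
        subst h
        exact (Nat.not_odd_iff_even.2 hdeven) ho
      exact ⟨by omega, ⟨p, hp2, hp3⟩⟩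
  have hmemd : CminusMem lo hi d := by
    refine ⟨hdlo, hdhi, ?_⟩
    rcases Nat.even_or_odd hi with h | h
    · exact Or.inl h
    · refine Or.inr fun he => ?_
      rw [he] at hdeven
      exact (Nat.not_odd_iff_even.2 hdeven) h
  have hmemc₀ : CminusMem lo hi c₀ := hmem j hj c₀ hbj
  have hc₀hi : c₀ ≤ hi := hmemc₀.2.1
  have hUmem : ∀ (bb : ℕ → Option ℕ) (i c : ℕ), c ∈ unblkF hi k bb i ↔
      (c ≤ hi ∧ (occursIn k bb c ∧ i ≤ c ∧ ∀ o, Odd o → i < o → o ≤ c → ¬ occursIn k bb o)) := by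
    intro bb i c
    rw [unblkF, Finset.mem_filter, Finset.mem_range, Nat.lt_succ_iff]
  have hTmem : ∀ (bb : ℕ → Option ℕ) (i p : ℕ), p ∈ ubpF hi k bb i ↔
      (p ≤ k ∧ ∃ c, bb p = some c ∧ c ∈ unblkF hi k bb i) := by
    intro bb i p
    rw [ubpF, Finset.mem_filter, Finset.mem_range, Nat.lt_succ_iff]
  have hdU : occursIn k b d → d ∈ unblkF hi k b d := by
    intro h
    exact (hUmem b d d).2 ⟨hdhi, h, le_rfl, fun o ho h1 h2 _ => by omega⟩
  have hUge : ∀ c ∈ unblkF hi k b d, d ≤ c := fun c hc => ((hUmem b d c).1 hc).2.2.1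
  have claimA : ∀ i, i ≤ d → unblkF hi k B i = insert d (unblkF hi k b d) := by
    intro i hi'
    ext c
    rw [hUmem, Finset.mem_insert, hUmem]
    constructor
    · rintro ⟨hchi, hocc, hic, hno⟩
      rcases (hoccB c).1 hocc with h | ⟨p, hp1, hp2, hp3⟩
      · exact Or.inl h
      · have hdc : d ≤ c := hSge p c hp1 hp2 hp3
        refine Or.inr ⟨hchi, ⟨p, hp2, hp3⟩, hdc, ?_⟩
        intro o ho hdo hoc hocco
        exact hno o ho (by omega) hoc (hoccBofb o hocco (by omega))
    · rintro (rfl | ⟨hchi, hocc, hdc, hno⟩)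
      · refine ⟨hdhi, (hoccB d).2 (Or.inl rfl), hi', ?_⟩
        intro o ho hio hod hocc
        have := hoddB o ho hocc
        omega
      · refine ⟨hchi, hoccBofb c hocc hdc, by omega, ?_⟩
        intro o ho hio hoc hoccBo
        obtain ⟨hdo, hob⟩ := hoddB o ho hoccBo
        exact hno o ho hdo hoc hob
  have claimB : ∀ i, d < i → unblkF hi k B i = unblkF hi k b i := by
    intro i hi'
    ext c
    rw [hUmem, hUmem]
    constructor
    · rintro ⟨hchi, hocc, hic, hno⟩
      rcases (hoccB c).1 hocc with h | ⟨p, hp1, hp2, hp3⟩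
      · omega
      · refine ⟨hchi, ⟨p, hp2, hp3⟩, hic, ?_⟩
        intro o ho hio hoc hocco
        exact hno o ho hio hoc (hoccBofb o hocco (by omega))
    · rintro ⟨hchi, hocc, hic, hno⟩
      refine ⟨hchi, hoccBofb c hocc (by omega), hic, ?_⟩
      intro o ho hio hoc hoccBo
      obtain ⟨hdo, hob⟩ := hoddB o ho hoccBo
      exact hno o ho hio hoc hob
  have claimD : ∀ i, i ≤ d → ubpF hi k B i = insert 0 (insert j (ubpF hi k b d)) := by
    intro i hi'
    ext p
    rw [hTmem, Finset.mem_insert, Finset.mem_insert, hTmem]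
    constructor
    · rintro ⟨hpk, c, hBp, hcmem⟩
      rw [claimA i hi', Finset.mem_insert] at hcmem
      rcases Nat.lt_trichotomy p j with h | h | h
      · rcases Nat.eq_zero_or_pos p with h0 | h0
        · exact Or.inl h0
        · rw [hBmid p h0 h] at hBp
          exact absurd hBp (by simp)
      · exact Or.inr (Or.inl h)
      · have hbp : b p = some c := by rw [← hBgt p h hpk]; exact hBp
        refine Or.inr (Or.inr ⟨hpk, c, hbp, ?_⟩)
        rcases hcmem with rfl | h'
        · exact hdU ⟨p, hpk, hbp⟩
        · exact h'
    · rintro (rfl | rfl | ⟨hpk, c, hbp, hcU⟩)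
      · exact ⟨Nat.zero_le k, d, hB0, by rw [claimA i hi']; exact Finset.mem_insert_self _ _⟩
      · exact ⟨hj, d, hBj, by rw [claimA i hi']; exact Finset.mem_insert_self _ _⟩
      · have hdc : d ≤ c := hUge c hcU
        have hpgt : j < p := by
          by_contra h
          have := hle_c₀ p c (by omega) hbp
          omega
        exact ⟨hpk, c, by rw [hBgt p hpgt hpk]; exact hbp,
          by rw [claimA i hi']; exact Finset.mem_insert_of_mem hcU⟩
  have claimC : ∀ i, d < i → ubpF hi k B i = ubpF hi k b i := by
    intro i hi'
    ext p
    rw [hTmem, hTmem]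
    constructor
    · rintro ⟨hpk, c, hBp, hcmem⟩
      rw [claimB i hi'] at hcmem
      have hic : i ≤ c := ((hUmem b i c).1 hcmem).2.2.1
      rcases Nat.lt_trichotomy p j with h | h | h
      · rcases Nat.eq_zero_or_pos p with h0 | h0
        · subst h0
          rw [hB0] at hBp
          have : d = c := Option.some.inj hBp
          omega
        · rw [hBmid p h0 h] at hBp
          exact absurd hBp (by simp)
      · subst h
        rw [hBj] at hBp
        have : d = c := Option.some.inj hBp
        omega
      · exact ⟨hpk, c, by rw [← hBgt p h hpk]; exact hBp, hcmem⟩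
    · rintro ⟨hpk, c, hbp, hcU⟩
      have hic : i ≤ c := ((hUmem b i c).1 hcU).2.2.1
      have hpgt : j < p := by
        by_contra h
        have := hle_c₀ p c (by omega) hbp
        omega
      exact ⟨hpk, c, by rw [hBgt p hpgt hpk]; exact hbp, by rw [claimB i hi']; exact hcU⟩
  have claimE : unblkF hi k b c₀ = insert c₀ (unblkF hi k b d) := by
    ext c
    rw [hUmem, Finset.mem_insert, hUmem]
    constructor
    · rintro ⟨hchi, hocc, hc₀c, hno⟩
      rcases eq_or_lt_of_le hc₀c with h | h
      · exact Or.inl h.symm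
      · have hdc : d ≤ c := (hoccgt c hocc h).2
        exact Or.inr ⟨hchi, hocc, hdc, fun o ho hdo hoc hocco => hno o ho (by omega) hoc hocco⟩
    · rintro (rfl | ⟨hchi, hocc, hdc, hno⟩)
      · exact ⟨hc₀hi, ⟨j, hj, hbj⟩, le_rfl, fun o ho h1 h2 _ => by omega⟩
      · exact ⟨hchi, hocc, by omega,
          fun o ho hc₀o hoc hocco => hno o ho (hoddgt o ho hocco hc₀o) hoc hocco⟩
  have claimF : ubpF hi k b c₀ = insert j (ubpF hi k b d) := by
    ext p
    rw [hTmem, Finset.mem_insert, hTmem]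
    constructor
    · rintro ⟨hpk, c, hbp, hcmem⟩
      rw [claimE, Finset.mem_insert] at hcmem
      rcases hcmem with rfl | hcU
      · left
        by_contra hne
        exact hconc _ hc₀odd p j hpk hj hne hbp hbj
      · exact Or.inr ⟨hpk, c, hbp, hcU⟩
    · rintro (rfl | ⟨hpk, c, hbp, hcU⟩)
      · exact ⟨hj, c₀, hbj, by rw [claimE]; exact Finset.mem_insert_self _ _⟩
      · exact ⟨hpk, c, hbp, by rw [claimE]; exact Finset.mem_insert_of_mem hcU⟩
  have hc₀notU : c₀ ∉ unblkF hi k b d := fun h => absurd (hUge c₀ h) (by omega)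
  have hjnotT : j ∉ ubpF hi k b d := by
    intro h
    obtain ⟨_, c, hbp, hcU⟩ := (hTmem b d j).1 h
    rw [hbp] at hbj
    have := hUge c hcU
    have := Option.some.inj hbj
    omega
  have hstar : 2 ^ j + (∑ p ∈ ubpF hi k b d, 2 ^ p) ≤ ℓ c₀ + ∑ c ∈ unblkF hi k b d, ℓ c := by
    have h := hLen c₀ hmemc₀
    rw [claimE, claimF, Finset.sum_insert hc₀notU, Finset.sum_insert hjnotT] at h
    exact h
  -- the c₀-witness
  have hoccc₀ : occursIn k b c₀ := ⟨j, hj, hbj⟩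
  obtain ⟨hl1, hcbd0, hcmono0, hceven0, hclast0, hcinner0, hcouter0⟩ := hWit c₀ hoccc₀
  have hsc₀ : startIdx c₀ = 0 := if_neg (fun h => (Nat.not_odd_iff_even.2 h) hc₀odd)
  rw [hsc₀] at hcbd0 hcmono0 hceven0 hcinner0
  have hsd' : startIdx d = 1 := if_pos hdeven
  set D : ℕ := if occursIn k b d then ℓ d else 0 with hDdef
  set Ld : ℕ := D + ℓ c₀ + 1 with hLddef
  set Q : ℕ → ℕ := fun t =>
    if t ≤ D then P d t else if t ≤ D + ℓ c₀ then P c₀ (t - D - 1) else m + 1 with hQdef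
  have hQ : IsCWit φ v (m + 1) d Ld Q := by
    rw [hLddef, hQdef]
    by_cases hdocc : occursIn k b d
    · obtain ⟨hd1, hdbd0, hdmono0, hdeven0, hdlast0, hdinner0, hdouter0⟩ := hWit d hdocc
      rw [hsd'] at hdbd0 hdmono0 hdeven0 hdinner0
      have hDval : D = ℓ d := if_pos hdocc
      refine concat_wit φ v m d c₀ D (ℓ c₀) (P d) (P c₀) hdeven hc₀d hl1
        (fun t ht => hcbd0 t (Nat.zero_le t) ht)
        (fun t ht => hcmono0 t (Nat.zero_le t) ht)
        (fun t ht => hceven0 t (Nat.zero_le t) ht)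
        hclast0
        (fun t ht s hs1 hs2 => hcinner0 t (Nat.zero_le t) ht s hs1 hs2)
        hcouter0 hd.symm
        (fun t h1 h2 => hdbd0 t h1 (by omega))
        (fun t h1 h2 => hdmono0 t h1 (by omega))
        (fun t h1 h2 => hdeven0 t h1 (by omega))
        (fun _ => by rw [hDval]; exact hdlast0)
        (fun t h1 h2 s hs1 hs2 => hdinner0 t h1 (by omega) s hs1 hs2)
        (fun _ => by rw [hDval]; exact hdouter0)
        (fun _ => by rw [hDval, ← hsc₀]; exact hOrd d c₀ hdocc hoccc₀ hc₀d)
    · have hDval : D = 0 := if_neg hdocc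
      refine concat_wit φ v m d c₀ D (ℓ c₀) (P d) (P c₀) hdeven hc₀d hl1
        (fun t ht => hcbd0 t (Nat.zero_le t) ht)
        (fun t ht => hcmono0 t (Nat.zero_le t) ht)
        (fun t ht => hceven0 t (Nat.zero_le t) ht)
        hclast0
        (fun t ht s hs1 hs2 => hcinner0 t (Nat.zero_le t) ht s hs1 hs2)
        hcouter0 hd.symm
        (fun t h1 h2 => by omega)
        (fun t h1 h2 => by omega)
        (fun t h1 h2 => absurd (lt_of_le_of_lt h1 h2) (by omega))
        (fun h1 => absurd h1 (by omega))
        (fun t h1 h2 s hs1 hs2 => absurd (lt_of_le_of_lt h1 h2) (by omega))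
        (fun h1 => absurd h1 (by omega))
        (fun h1 => absurd h1 (by omega))
  -- value classification of B entries
  have hval : ∀ p c, p ≤ k → B p = some c →
      ((p = 0 ∨ p = j) ∧ c = d) ∨ (j < p ∧ b p = some c ∧ d ≤ c) := by
    intro p c hpk hc
    rcases Nat.lt_trichotomy p j with h | h | h
    · rcases Nat.eq_zero_or_pos p with h0 | h0
      · subst h0
        rw [hB0] at hc
        exact Or.inl ⟨Or.inl rfl, (Option.some.inj hc).symm⟩
      · rw [hBmid p h0 h] at hc
        exact absurd hc (by simp)
    · subst h
      rw [hBj] at hc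
      exact Or.inl ⟨Or.inr rfl, (Option.some.inj hc).symm⟩
    · have hbp : b p = some c := by rw [← hBgt p h hpk]; exact hc
      exact Or.inr ⟨h, hbp, hSge p c h hpk hbp⟩
  refine ⟨?_, ?_, ?_, ?_, (fun c => if c = d then Ld else ℓ c),
    (fun c => if c = d then Q else P c), ?_, ?_, ?_⟩
  · -- CminusMem
    intro p hpk c hc
    rcases hval p c hpk hc with ⟨_, rfl⟩ | ⟨_, hbp, _⟩
    · exact hmemd
    · exact hmem p hpk c hbp
  · -- order
    intro i2 j2 hlt hik ci cj hBi hBj2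
    rcases hval i2 ci hik hBi with ⟨hp1, he1⟩ | ⟨hp1, hb1, hd1⟩
    · rcases hval j2 cj (by omega) hBj2 with ⟨hp2, he2⟩ | ⟨hp2, hb2, hd2⟩
      · omega
      · omega
    · rcases hval j2 cj (by omega) hBj2 with ⟨hp2, he2⟩ | ⟨hp2, hb2, hd2⟩
      · omega
      · exact hord i2 j2 hlt hik ci cj hb1 hb2
  · -- conciseness
    intro o ho i2 j2 hik hjk hne hBi hBj2
    rcases hval i2 o hik hBi with ⟨_, he1⟩ | ⟨hp1, hb1, hd1⟩
    · exact (Nat.not_odd_iff_even.2 (he1 ▸ hdeven)) ho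
    · rcases hval j2 o hjk hBj2 with ⟨_, he2⟩ | ⟨hp2, hb2, hd2⟩
      · exact (Nat.not_odd_iff_even.2 (he2 ▸ hdeven)) ho
      · exact hconc o ho i2 j2 hik hjk hne hb1 hb2
  · -- b' 0 even
    intro c hc0
    rw [hB0] at hc0
    have h : d = c := Option.some.inj hc0
    exact h ▸ (Nat.not_odd_iff_even.2 hdeven)
  · -- witnesses
    intro c hocc
    by_cases hc : c = d
    · subst hc
      simp only [if_pos rfl]
      exact hQ
    · simp only [if_neg hc]
      rcases (hoccB c).1 hocc with h | ⟨p, h1, h2, h3⟩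
      · exact absurd h hc
      · have hdc : d ≤ c := hSge p c h1 h2 h3
        exact (hWit c ⟨p, h2, h3⟩).extend (hd ▸ hdc)
  · -- ordered witnesses
    intro i2 j2 hocci hoccj hlt
    by_cases hi2 : i2 = d
    · exfalso
      subst hi2
      rcases (hoccB j2).1 hoccj with h | ⟨p, h1, h2, h3⟩
      · omega
      · have := hSge p j2 h1 h2 h3
        omega
    · simp only [if_neg hi2]
      rcases (hoccB i2).1 hocci with h | ⟨p, h1, h2, h3⟩
      · exact absurd h hi2
      · have hocci' : occursIn k b i2 := ⟨p, h2, h3⟩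
        have hdi : d ≤ i2 := hSge p i2 h1 h2 h3
        have hdi' : d < i2 := by omega
        by_cases hj2 : j2 = d
        · subst hj2
          rw [show (if d = d then Q else P d) = Q from if_pos rfl, hsd']
          by_cases hdocc : occursIn k b d
          · have hDval : D = ℓ d := if_pos hdocc
            have h1D : 1 ≤ D := by
              have := (hWit d hdocc).1
              omega
            have hq1 : Q 1 = P d 1 := by
              rw [hQdef]
              dsimp only
              rw [if_pos h1D]
            rw [hq1]
            have h := hOrd i2 d hocci' hdocc hdi'
            rwa [hsd'] at h
          · have hDval : D = 0 := if_neg hdocc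
            have hq1 : Q 1 = P c₀ 0 := by
              rw [hQdef]
              dsimp only
              rw [if_neg (by omega), if_pos (by omega), (by omega : 1 - D - 1 = 0)]
            rw [hq1]
            have h := hOrd i2 c₀ hocci' hoccc₀ (by omega)
            rwa [hsc₀] at h
        · simp only [if_neg hj2]
          rcases (hoccB j2).1 hoccj with h | ⟨q, g1, g2, g3⟩
          · exact absurd h hj2
          · exact hOrd i2 j2 hocci' ⟨q, g2, g3⟩ hlt
  · -- lengths
    intro i hi'
    by_cases hid : i ≤ d
    · rw [claimA i hid, claimD i hid]
      have hsum1 : (∑ p ∈ insert 0 (insert j (ubpF hi k b d)), 2 ^ p) ≤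
          1 + (2 ^ j + ∑ p ∈ ubpF hi k b d, 2 ^ p) := by
        refine le_trans (nat_sum_insert_le 0 _ _) ?_
        rw [pow_zero]
        exact Nat.add_le_add_left (nat_sum_insert_le j _ _) 1
      have hsum2 : ℓ c₀ + 1 + (∑ c ∈ unblkF hi k b d, ℓ c) ≤
          ∑ c ∈ insert d (unblkF hi k b d), (if c = d then Ld else ℓ c) := by
        by_cases hdU' : d ∈ unblkF hi k b d
        · rw [Finset.insert_eq_self.2 hdU']
          have e1 : (∑ c ∈ unblkF hi k b d, (if c = d then Ld else ℓ c)) =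
              Ld + ∑ c ∈ (unblkF hi k b d).erase d, ℓ c := by
            rw [← Finset.add_sum_erase _ _ hdU', if_pos rfl]
            congr 1
            exact Finset.sum_congr rfl fun x hx => if_neg (Finset.ne_of_mem_erase hx)
          have e2 : (∑ c ∈ unblkF hi k b d, ℓ c) =
              ℓ d + ∑ c ∈ (unblkF hi k b d).erase d, ℓ c :=
            (Finset.add_sum_erase _ _ hdU').symm
          have e3 : D = ℓ d := if_pos (((hUmem b d d).1 hdU').2.1)
          omega
        · rw [Finset.sum_insert hdU', if_pos rfl]
          have e1 : (∑ c ∈ unblkF hi k b d, (if c = d then Ld else ℓ c)) =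
              ∑ c ∈ unblkF hi k b d, ℓ c :=
            Finset.sum_congr rfl fun x hx => if_neg (fun (h : x = d) => hdU' (h ▸ hx))
          have e3 : D = 0 := if_neg (fun h => hdU' (hdU h))
          omega
      refine le_trans hsum1 (le_trans ?_ hsum2)
      omega
    · rw [claimB i (by omega), claimC i (by omega)]
      have e1 : (∑ c ∈ unblkF hi k b i, (if c = d then Ld else ℓ c)) =
          ∑ c ∈ unblkF hi k b i, ℓ c := by
        refine Finset.sum_congr rfl fun c hc => if_neg ?_
        have := ((hUmem b i c).1 hc).2.2.1
        omega
      rw [e1]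
      exact hLen i hi'
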